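/- Shattering lower bound for Bernoulli bandit instances: let d points x_1,…,x_d be shattered by an M-action policy class Π via functions f_{-1}, f_1, and for σ ∈ {±1}^d let P_σ be the instance where X is uniform on {x_1,…,x_d} and Y(f_{σ_j}(x_j)) | X = x_j ~ ȳ·Bernoulli((1+Δ)/2), Y(f_{-σ_j}(x_j)) | X = x_j ~ ȳ·Bernoulli((1-Δ)/2). Then for the KL-robust value V_δ with radius δ and any policy π̂, the regret under P_σ satisfies V_δ(π*) - V_δ(π̂) ≥ (Δ/(2d))·Σ_{j=1}^d 1{π̂(x_j) ≠ f_{σ_j}(x_j)}, provided δ ≤ 0.2 and Δ ∈ (0, 0.1), where g_δ'(ξ) ≥ 1/2 is used for ξ ∈ ((1-Δ)/2, (1+Δ)/2). -/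

import Mathlib

open Finset

/-- Binary KL divergence `D(p‖q) = p·log(p/q) + (1-p)·log((1-p)/(1-q))`. -/
noncomputable def bernKL (p q : ℝ) : ℝ :=
  p * Real.log (p / q) + (1 - p) * Real.log ((1 - p) / (1 - q))

/-- Lower endpoint of the binary-KL ball of radius `δ` around `q`. -/
noncomputable def gKL (δ q : ℝ) : ℝ :=
  sInf {p : ℝ | p ∈ Set.Icc (0 : ℝ) 1 ∧ bernKL p q ≤ δ}

lemma bernKL_expand {q : ℝ} (hq : q ≠ 0) (hq1 : (1:ℝ) - q ≠ 0) (p : ℝ) :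
    bernKL p q = p * Real.log p - p * Real.log q
      + ((1 - p) * Real.log (1 - p) - (1 - p) * Real.log (1 - q)) := by
  unfold bernKL
  by_cases hp : p = 0
  · simp [hp, Real.log_div one_ne_zero hq1]
  · by_cases hp1 : (1:ℝ) - p = 0
    · rw [hp1]; simp [show p = 1 by linarith, Real.log_div one_ne_zero hq]
    · rw [Real.log_div hp hq, Real.log_div hp1 hq1]; ring

lemma bernKL_self {q : ℝ} (hq : q ≠ 0) (hq1 : (1:ℝ) - q ≠ 0) : bernKL q q = 0 := by
  unfold bernKL
  rw [div_self hq, div_self hq1, Real.log_one]; ring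

lemma gKL_bddBelow (δ q : ℝ) : BddBelow {p : ℝ | p ∈ Set.Icc (0 : ℝ) 1 ∧ bernKL p q ≤ δ} :=
  ⟨0, fun _ hp => hp.1.1⟩

lemma gKL_mem {δ q : ℝ} (hδ : 0 ≤ δ) (hq0 : 0 < q) (hq1 : q < 1) :
    gKL δ q ∈ {p : ℝ | p ∈ Set.Icc (0 : ℝ) 1 ∧ bernKL p q ≤ δ} := by
  have hq1' : (0:ℝ) < 1 - q := by linarith
  have hset : {p : ℝ | p ∈ Set.Icc (0 : ℝ) 1 ∧ bernKL p q ≤ δ}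
      = Set.Icc (0:ℝ) 1 ∩ (fun p => p * Real.log p - p * Real.log q
        + ((1 - p) * Real.log (1 - p) - (1 - p) * Real.log (1 - q))) ⁻¹' Set.Iic δ := by
    ext p
    simp [Set.mem_Icc, bernKL_expand hq0.ne' hq1'.ne', and_comm]
  have hcont : Continuous (fun p : ℝ => p * Real.log p - p * Real.log q
      + ((1 - p) * Real.log (1 - p) - (1 - p) * Real.log (1 - q))) := by
    have h1 : Continuous fun p : ℝ => p * Real.log p := Real.continuous_mul_log
    have h2 : Continuous fun p : ℝ => (1 - p) * Real.log (1 - p) :=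
      Real.continuous_mul_log.comp (continuous_const.sub continuous_id)
    fun_prop
  have hclosed : IsClosed {p : ℝ | p ∈ Set.Icc (0 : ℝ) 1 ∧ bernKL p q ≤ δ} := by
    rw [hset]
    exact isClosed_Icc.inter (IsClosed.preimage hcont isClosed_Iic)
  apply hclosed.csInf_mem
  · exact ⟨q, ⟨⟨hq0.le, hq1.le⟩, by rw [bernKL_self hq0.ne' hq1'.ne']; exact hδ⟩⟩
  · exact gKL_bddBelow δ q

lemma neg_mul_log_le {p : ℝ} (hp : 0 ≤ p) : -(p * Real.log p) ≤ Real.exp (-2) + p := by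
  rcases eq_or_lt_of_le hp with h | h
  · simp [← h]; positivity
  · have h1 : Real.log (Real.exp (-2) / p) ≤ Real.exp (-2) / p - 1 :=
      Real.log_le_sub_one_of_pos (by positivity)
    rw [Real.log_div (by positivity) h.ne'] at h1
    rw [Real.log_exp] at h1
    have := mul_le_mul_of_nonneg_left h1 h.le
    have h2 : p * (Real.exp (-2) / p) = Real.exp (-2) := by field_simp
    nlinarith

lemma neg_one_sub_mul_log_le {p : ℝ} (hp : 0 ≤ p) (hp1 : p ≤ 1) :
    -((1 - p) * Real.log (1 - p)) ≤ p := by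
  rcases eq_or_lt_of_le hp1 with h | h
  · simp [h]
  · have h0 : 0 < 1 - p := by linarith
    have h1 : Real.log ((1:ℝ) / (1 - p)) ≤ 1 / (1 - p) - 1 :=
      Real.log_le_sub_one_of_pos (by positivity)
    rw [Real.log_div one_ne_zero h0.ne'] at h1
    simp only [Real.log_one] at h1
    have := mul_le_mul_of_nonneg_left h1 h0.le
    have h2 : (1 - p) * (1 / (1 - p)) = 1 := by field_simp
    nlinarith

lemma exp_neg_two_lt : Real.exp (-2) < Real.log 2 - 5/9 := by
  have h1 : (7.389056:ℝ) < Real.exp 2 := by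
    have := Real.exp_one_gt_d9
    have h2 : Real.exp 2 = Real.exp 1 * Real.exp 1 := by
      rw [← Real.exp_add]; norm_num
    nlinarith
  have h2 : Real.exp (-2) = (Real.exp 2)⁻¹ := by rw [← Real.exp_neg]
  have h3 : Real.exp (-2) < 7.389056⁻¹ := by
    rw [h2]
    exact inv_strictAnti₀ (by norm_num) h1
  have := Real.log_two_gt_d9
  nlinarith

/-- Key substitute for Pinsker's inequality on the relevant range. -/
lemma keyB {p b : ℝ} (hp0 : 0 ≤ p) (hp1 : p ≤ 1) (hb0 : 1/2 ≤ b) (hb1 : b ≤ 11/20) :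
    10/9 * (b - 2*p) ≤ bernKL p b := by
  have hbne : b ≠ 0 := by positivity
  have h1b : (0:ℝ) < 1 - b := by linarith
  rw [bernKL_expand hbne h1b.ne']
  have e1 : Real.log (2 * (1 - b)) ≤ 2 * (1 - b) - 1 := Real.log_le_sub_one_of_pos (by linarith)
  rw [Real.log_mul two_ne_zero h1b.ne'] at e1
  have e2 : Real.log (b / (1 - b)) ≤ b / (1 - b) - 1 := Real.log_le_sub_one_of_pos (by positivity)
  rw [Real.log_div hbne h1b.ne'] at e2
  have e3 : b / (1 - b) ≤ 11/9 := by
    rw [div_le_iff₀ h1b]; linarith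
  have e4 : Real.log b - Real.log (1 - b) ≤ 2/9 := by linarith
  have e5 := neg_mul_log_le hp0
  have e6 := neg_one_sub_mul_log_le hp0 hp1
  have e7 := exp_neg_two_lt
  have e8 : p * (Real.log b - Real.log (1 - b)) ≤ p * (2/9) :=
    mul_le_mul_of_nonneg_left e4 hp0
  nlinarith

lemma flog_conv {p1 p2 q1 q2 l : ℝ} (hp1 : 0 ≤ p1) (hp2 : 0 ≤ p2)
    (hq1 : 0 < q1) (hq2 : 0 < q2) (hl0 : 0 ≤ l) (hl1 : l ≤ 1) :
    (l*p1 + (1-l)*p2) * Real.log ((l*p1 + (1-l)*p2) / (l*q1 + (1-l)*q2)) ≤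
      l * (p1 * Real.log (p1 / q1)) + (1-l) * (p2 * Real.log (p2 / q2)) := by
  have hl1' : 0 ≤ 1 - l := by linarith
  have hQ : 0 < l*q1 + (1-l)*q2 := by
    rcases lt_or_ge l 1 with h | h
    · have h2 : 0 < (1-l)*q2 := mul_pos (by linarith) hq2
      nlinarith [mul_nonneg hl0 hq1.le]
    · have hl : l = 1 := le_antisymm hl1 h
      simp [hl]; linarith
  set Q := l*q1 + (1-l)*q2 with hQdef
  have hμν : l*q1/Q + (1-l)*q2/Q = 1 := by field_simp; exact hQdef.symm
  have hconv := Real.convexOn_mul_log.2 (Set.mem_Ici.mpr (by positivity : (0:ℝ) ≤ p1/q1))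
    (Set.mem_Ici.mpr (by positivity : (0:ℝ) ≤ p2/q2))
    (by positivity : (0:ℝ) ≤ l*q1/Q) (by positivity : (0:ℝ) ≤ (1-l)*q2/Q) hμν
  simp only [smul_eq_mul] at hconv
  have harg : l*q1/Q * (p1/q1) + (1-l)*q2/Q * (p2/q2) = (l*p1 + (1-l)*p2)/Q := by
    field_simp
  rw [harg] at hconv
  have := mul_le_mul_of_nonneg_left hconv hQ.le
  have hL : Q * ((l*p1 + (1-l)*p2)/Q * Real.log ((l*p1 + (1-l)*p2)/Q))
      = (l*p1 + (1-l)*p2) * Real.log ((l*p1 + (1-l)*p2) / Q) := by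
    field_simp
  have hR : Q * (l*q1/Q * (p1/q1 * Real.log (p1/q1)) + (1-l)*q2/Q * (p2/q2 * Real.log (p2/q2)))
      = l * (p1 * Real.log (p1 / q1)) + (1-l) * (p2 * Real.log (p2 / q2)) := by
    field_simp
  rw [hL, hR] at this
  exact this

lemma bernKL_conv {p1 p2 q1 q2 l : ℝ} (hp10 : 0 ≤ p1) (hp11 : p1 ≤ 1)
    (hp20 : 0 ≤ p2) (hp21 : p2 ≤ 1) (hq10 : 0 < q1) (hq11 : q1 < 1)
    (hq20 : 0 < q2) (hq21 : q2 < 1) (hl0 : 0 ≤ l) (hl1 : l ≤ 1) :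
    bernKL (l*p1 + (1-l)*p2) (l*q1 + (1-l)*q2) ≤
      l * bernKL p1 q1 + (1-l) * bernKL p2 q2 := by
  have h1 := flog_conv hp10 hp20 hq10 hq20 hl0 hl1
  have h2 := flog_conv (p1 := 1 - p1) (p2 := 1 - p2) (q1 := 1 - q1) (q2 := 1 - q2)
    (by linarith) (by linarith) (by linarith) (by linarith) hl0 hl1
  have e1 : l*(1-p1) + (1-l)*(1-p2) = 1 - (l*p1 + (1-l)*p2) := by ring
  have e2 : l*(1-q1) + (1-l)*(1-q2) = 1 - (l*q1 + (1-l)*q2) := by ring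
  rw [e1, e2] at h2
  unfold bernKL
  linarith

lemma exp_taylor3 {δ : ℝ} (h : 0 ≤ δ) : 1 + δ + δ^2/2 + δ^3/6 ≤ Real.exp δ := by
  have := Real.sum_le_exp_of_nonneg h 4
  simp [Finset.sum_range_succ, Nat.factorial] at this
  linarith

lemma anchor_feas {δ : ℝ} (hδ0 : 0 < δ) (hδ : δ ≤ 1) :
    bernKL 0 (δ - δ^2/2) ≤ δ := by
  have hq0 : 0 < δ - δ^2/2 := by nlinarith
  have hq1 : δ - δ^2/2 < 1 := by nlinarith
  have h1 : (0:ℝ) < 1 - (δ - δ^2/2) := by linarith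
  have hb : bernKL 0 (δ - δ^2/2) = - Real.log (1 - (δ - δ^2/2)) := by
    unfold bernKL
    norm_num
  rw [hb]
  have ht := exp_taylor3 hδ0.le
  have hprod : Real.exp (-δ) * Real.exp δ = 1 := by
    rw [← Real.exp_add]; simp
  have hA : 1 ≤ (1 - (δ - δ^2/2)) * Real.exp δ := by
    calc (1:ℝ) ≤ (1 - δ + δ^2/2) * (1 + δ + δ^2/2 + δ^3/6) := by
          nlinarith [pow_pos hδ0 3, pow_pos hδ0 4, pow_pos hδ0 5]
    _ ≤ (1 - δ + δ^2/2) * Real.exp δ := by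
          apply mul_le_mul_of_nonneg_left ht; nlinarith
    _ = (1 - (δ - δ^2/2)) * Real.exp δ := by ring
  have hexp : Real.exp (-δ) ≤ 1 - (δ - δ^2/2) := by
    nlinarith [Real.exp_pos δ, Real.exp_pos (-δ)]
  have := Real.log_le_log (Real.exp_pos (-δ)) hexp
  rw [Real.log_exp] at this
  linarith

/-- The central gap estimate: for `q ∈ [1/4, b]` with `b = (1+Δ)/2`,
`gKL δ b - gKL δ q ≥ (b - q)/2`. -/
lemma gKL_gap {δ Δ q : ℝ} (hδ0 : 0 < δ) (hδ : δ ≤ 0.2)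
    (hΔ0 : 0 < Δ) (hΔ1 : Δ < 0.1) (hq : 1/4 ≤ q) (hqb : q ≤ (1+Δ)/2) :
    ((1+Δ)/2 - q)/2 ≤ gKL δ ((1+Δ)/2) - gKL δ q := by
  obtain ⟨b, hbdef⟩ : ∃ b : ℝ, b = (1+Δ)/2 := ⟨_, rfl⟩
  rw [← hbdef] at hqb ⊢
  have hb0 : 1/2 ≤ b := by rw [hbdef]; linarith
  have hb1 : b ≤ 11/20 := by rw [hbdef]; linarith
  obtain ⟨⟨hg0, hg1⟩, hgD⟩ := gKL_mem (δ := δ) (q := b) hδ0.le (by linarith) (by linarith)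
  obtain ⟨gb, hgbdef⟩ : ∃ g : ℝ, g = gKL δ b := ⟨_, rfl⟩
  rw [← hgbdef] at hg0 hg1 hgD ⊢
  obtain ⟨q0, hq0def⟩ : ∃ t : ℝ, t = δ - δ^2/2 := ⟨_, rfl⟩
  have hq00 : 0 < q0 := by rw [hq0def]; nlinarith
  have hq01 : q0 ≤ δ := by rw [hq0def]; nlinarith
  have hq0q : q0 < q := by linarith
  have hq0b : q0 < b := by linarith
  have hq0lt1 : q0 < 1 := by linarith
  -- lower bound on gb : 2 * gb ≥ b - q0
  have h2gb : b - q0 ≤ 2 * gb := by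
    have hkb := keyB hg0 hg1 hb0 hb1
    have h9 : 10/9 * (b - 2*gb) ≤ δ := le_trans hkb hgD
    have h10 : 9/10 * δ ≤ q0 := by rw [hq0def]; nlinarith
    linarith
  -- transport feasibility by convexity
  obtain ⟨l, hldef⟩ : ∃ l : ℝ, l = (q - q0)/(b - q0) := ⟨_, rfl⟩
  have hbq0 : (0:ℝ) < b - q0 := by linarith
  have hl0 : 0 ≤ l := by
    rw [hldef]; apply div_nonneg <;> linarith
  have hl1 : l ≤ 1 := by
    rw [hldef, div_le_one hbq0]; linarith
  have hcomb : l * b + (1-l) * q0 = q := by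
    rw [hldef]; field_simp; ring
  have hfeas : bernKL (l * gb) q ≤ δ := by
    have h0feas : bernKL 0 q0 ≤ δ := by
      rw [hq0def]; exact anchor_feas hδ0 (by linarith)
    have hc := bernKL_conv (p1 := gb) (p2 := 0) (q1 := b) (q2 := q0)
      hg0 hg1 le_rfl zero_le_one (by linarith) (by linarith) hq00 hq0lt1 hl0 hl1
    rw [hcomb] at hc
    have e0 : l * gb + (1 - l) * 0 = l * gb := by ring
    rw [e0] at hc
    have hint1 := mul_le_mul_of_nonneg_left hgD hl0
    have hint2 := mul_le_mul_of_nonneg_left h0feas (by linarith : (0:ℝ) ≤ 1 - l)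
    linarith
  have hgq : gKL δ q ≤ l * gb := by
    apply csInf_le (gKL_bddBelow δ q)
    exact ⟨⟨mul_nonneg hl0 hg0, mul_le_one₀ hl1 hg0 hg1⟩, hfeas⟩
  -- conclude
  have hml : (1 - l) * (b - q0) = b - q := by
    rw [hldef]; field_simp; ring
  have h1ml : 0 ≤ 1 - l := by linarith
  have hfin := mul_le_mul_of_nonneg_left h2gb h1ml
  linarith
/-- Shattering lower bound for Bernoulli bandit instances: on the hard instance
`P_σ` built from `d` shattered points (uniform covariate, rewards
`ȳ·Bernoulli((1±Δ)/2)` at the two shattering actions and `ȳ·Bernoulli(1/4)`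
otherwise), the KL-robust value of a policy equals the average of `ȳ·g_δ(·)`
at the corresponding Bernoulli parameters, and the regret of any policy `π̂`
against the optimal in-class policy `π*` (which selects `f_{σ_j}(x_j)` at each
`x_j`) is at least `(Δ/(2d))·Σⱼ 1{π̂(xⱼ) ≠ f_{σ_j}(xⱼ)}`, provided `δ ≤ 0.2`
and `Δ ∈ (0, 0.1)`. -/
theorem stmt_17 {𝒳 : Type*} {M d : ℕ} (hd : 0 < d)
    (Pol : Set (𝒳 → Fin M)) (x : Fin d → 𝒳)
    (fneg fpos : 𝒳 → Fin M)
    -- the points x₁,…,x_d are shattered by Pol via f₋₁ = fneg and f₁ = fpos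
    (hdiff : ∀ j : Fin d, fneg (x j) ≠ fpos (x j))
    (hshatter : ∀ σ : Fin d → Bool, ∃ π ∈ Pol,
      ∀ j : Fin d, π (x j) = (if σ j then fpos else fneg) (x j))
    (δ Δ ybar : ℝ) (hδ0 : 0 < δ) (hδ : δ ≤ 0.2)
    (hΔ : Δ ∈ Set.Ioo (0 : ℝ) 0.1) (hybar : 1 ≤ ybar)
    (σ : Fin d → Bool)
    -- the KL-robust value V_δ under the instance P_σ, computed via g_δ
    (V : (𝒳 → Fin M) → ℝ)
    (hV : V = fun π => (1 / (d : ℝ)) * ∑ j : Fin d, ybar *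
      (if π (x j) = (if σ j then fpos else fneg) (x j) then gKL δ ((1 + Δ) / 2)
       else if π (x j) = (if σ j then fneg else fpos) (x j) then gKL δ ((1 - Δ) / 2)
       else gKL δ (1 / 4)))
    (πstar : 𝒳 → Fin M) (hπstarPol : πstar ∈ Pol)
    (hπstar : ∀ j : Fin d, πstar (x j) = (if σ j then fpos else fneg) (x j))
    (πhat : 𝒳 → Fin M) :
    (Δ / (2 * d)) * ∑ j : Fin d,
        (if πhat (x j) ≠ (if σ j then fpos else fneg) (x j) then (1 : ℝ) else 0)
      ≤ V πstar - V πhat := by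
  obtain ⟨hΔ0, hΔ1⟩ := hΔ
  have hΔ1' : Δ < 0.1 := hΔ1
  -- the two gap estimates
  have key1 : Δ/2 ≤ gKL δ ((1 + Δ)/2) - gKL δ ((1 - Δ)/2) := by
    have := gKL_gap (q := (1 - Δ)/2) hδ0 hδ hΔ0 hΔ1' (by linarith) (by linarith)
    linarith
  have key2 : Δ/2 ≤ gKL δ ((1 + Δ)/2) - gKL δ (1/4) := by
    have := gKL_gap (q := 1/4) hδ0 hδ hΔ0 hΔ1' (by linarith) (by linarith)
    linarith
  -- per-term bound
  have hterm : ∀ j : Fin d,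
      (Δ/2) * (if πhat (x j) ≠ (if σ j then fpos else fneg) (x j) then (1 : ℝ) else 0)
        ≤ ybar * (if πstar (x j) = (if σ j then fpos else fneg) (x j) then gKL δ ((1 + Δ) / 2)
            else if πstar (x j) = (if σ j then fneg else fpos) (x j) then gKL δ ((1 - Δ) / 2)
            else gKL δ (1 / 4))
          - ybar * (if πhat (x j) = (if σ j then fpos else fneg) (x j) then gKL δ ((1 + Δ) / 2)
            else if πhat (x j) = (if σ j then fneg else fpos) (x j) then gKL δ ((1 - Δ) / 2)
            else gKL δ (1 / 4)) := by
    intro j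
    rw [if_pos (hπstar j)]
    by_cases hc : πhat (x j) = (if σ j then fpos else fneg) (x j)
    · rw [if_pos hc]
      simp [hc]
    · rw [if_neg hc]
      have hind : (if πhat (x j) ≠ (if σ j then fpos else fneg) (x j) then (1 : ℝ) else 0) = 1 :=
        if_pos hc
      rw [hind, mul_one]
      by_cases hc2 : πhat (x j) = (if σ j then fneg else fpos) (x j)
      · rw [if_pos hc2]
        nlinarith
      · rw [if_neg hc2]
        nlinarith
  -- sum it up
  subst hV
  simp only
  rw [← mul_sub, ← Finset.sum_sub_distrib]
  have hsum : ∑ j : Fin d, (Δ/2) *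
      (if πhat (x j) ≠ (if σ j then fpos else fneg) (x j) then (1 : ℝ) else 0)
      ≤ ∑ j : Fin d, (ybar * (if πstar (x j) = (if σ j then fpos else fneg) (x j)
            then gKL δ ((1 + Δ) / 2)
            else if πstar (x j) = (if σ j then fneg else fpos) (x j) then gKL δ ((1 - Δ) / 2)
            else gKL δ (1 / 4))
          - ybar * (if πhat (x j) = (if σ j then fpos else fneg) (x j) then gKL δ ((1 + Δ) / 2)
            else if πhat (x j) = (if σ j then fneg else fpos) (x j) then gKL δ ((1 - Δ) / 2)
            else gKL δ (1 / 4))) :=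
    Finset.sum_le_sum (fun j _ => hterm j)
  have hd' : (0:ℝ) < (d:ℝ) := by exact_mod_cast hd
  rw [← Finset.mul_sum] at hsum
  have hre : (Δ / (2 * (d:ℝ))) * ∑ j : Fin d,
      (if πhat (x j) ≠ (if σ j then fpos else fneg) (x j) then (1 : ℝ) else 0)
      = (1/(d:ℝ)) * ((Δ/2) * ∑ j : Fin d,
      (if πhat (x j) ≠ (if σ j then fpos else fneg) (x j) then (1 : ℝ) else 0)) := by
    ring
  rw [hre]
  apply mul_le_mul_of_nonneg_left _ (by positivity : (0:ℝ) ≤ 1/(d:ℝ))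
  exact hsum
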